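/- Strong duality for Wasserstein distributionally robust optimization on a finite space: Let X be a nonempty finite subset of ℝ^d, f : X → ℝ, ε > 0, q ≥ 1 an integer, P̂ a probability measure on X, and c(x,y) := ‖x − y‖^q. Then inf over all probability measures P on X with W_q(P, P̂) ≤ ε of E_P[f] equals sup_{λ ≥ 0} ( E_{P̂}[ −(−f)^{λc} ] − ε^q λ ), where (−f)^{λc}(x) := max_{y ∈ X}( −f(y) − λ‖x−y‖^q ). -/

import Mathlib

open Finset

section Aux

variable {X : Type*} [Fintype X] [Nonempty X]

/-- Primal value set at transport budget `t`. -/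
def pSet (C : X → X → ℝ) (f phat : X → ℝ) (t : ℝ) : Set ℝ :=
  {E | ∃ π : X → X → ℝ, (∀ x y, 0 ≤ π x y) ∧ (∀ x, ∑ y, π x y = phat x) ∧
    (∑ x, ∑ y, C x y * π x y) ≤ t ∧ E = ∑ x, ∑ y, π x y * f y}

variable {C : X → X → ℝ} {f phat : X → ℝ}

lemma pSet_nonempty (hC0 : ∀ x, C x x = 0) (hp0 : ∀ x, 0 ≤ phat x)
    {t : ℝ} (ht : 0 ≤ t) : (pSet C f phat t).Nonempty := by
  classical
  refine ⟨∑ x, phat x * f x, fun x y => if y = x then phat x else 0, ?_, ?_, ?_, ?_⟩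
  · intro x y; dsimp only; split <;> simp [hp0]
  · intro x; simp
  · have h : ∀ x : X, (∑ y, C x y * (if y = x then phat x else 0)) = 0 := by
      intro x
      rw [Finset.sum_eq_single x]
      · simp [hC0]
      · intro b _ hb; simp [hb]
      · simp
    rw [Finset.sum_congr rfl fun x _ => h x]
    simpa using ht
  · refine Finset.sum_congr rfl fun x _ => ?_
    rw [Finset.sum_eq_single x]
    · simp
    · intro b _ hb; simp [hb]
    · simp

lemma pSet_lb (hp1 : ∑ x, phat x = 1) {t e : ℝ} (he : e ∈ pSet C f phat t) :
    univ.inf' univ_nonempty f ≤ e := by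
  obtain ⟨π, h0, hrow, -, rfl⟩ := he
  have h1 : ∑ x : X, ∑ y : X, π x y * (univ.inf' univ_nonempty f)
      ≤ ∑ x : X, ∑ y : X, π x y * f y := by
    refine Finset.sum_le_sum fun x _ => Finset.sum_le_sum fun y _ => ?_
    exact mul_le_mul_of_nonneg_left (Finset.inf'_le _ (mem_univ y)) (h0 x y)
  calc univ.inf' univ_nonempty f
      = ∑ x : X, ∑ y : X, π x y * (univ.inf' univ_nonempty f) := by
        simp only [← Finset.sum_mul, hrow, hp1, one_mul]
    _ ≤ _ := h1

lemma pSet_bdd (hp1 : ∑ x, phat x = 1) (t : ℝ) : BddBelow (pSet C f phat t) :=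
  ⟨univ.inf' univ_nonempty f, fun _ he => pSet_lb hp1 he⟩

lemma pSet_mono {a b : ℝ} (hab : a ≤ b) : pSet C f phat a ⊆ pSet C f phat b := by
  rintro e ⟨π, h0, hrow, hc, rfl⟩
  exact ⟨π, h0, hrow, hc.trans hab, rfl⟩

lemma pSet_mix {a b θ : ℝ} (hθ0 : 0 ≤ θ) (hθ1 : θ ≤ 1) {u v : ℝ}
    (hu : u ∈ pSet C f phat a) (hv : v ∈ pSet C f phat b) :
    θ * u + (1 - θ) * v ∈ pSet C f phat (θ * a + (1 - θ) * b) := by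
  obtain ⟨π1, h10, h1row, h1c, rfl⟩ := hu
  obtain ⟨π2, h20, h2row, h2c, rfl⟩ := hv
  refine ⟨fun x y => θ * π1 x y + (1 - θ) * π2 x y, ?_, ?_, ?_, ?_⟩
  · intro x y
    have := h10 x y; have := h20 x y
    show 0 ≤ θ * π1 x y + (1 - θ) * π2 x y
    nlinarith
  · intro x
    rw [Finset.sum_add_distrib, ← Finset.mul_sum, ← Finset.mul_sum, h1row, h2row]; ring
  · have e1 : ∑ x, ∑ y, C x y * (θ * π1 x y + (1 - θ) * π2 x y)
        = θ * (∑ x, ∑ y, C x y * π1 x y) + (1 - θ) * (∑ x, ∑ y, C x y * π2 x y) := by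
      rw [Finset.mul_sum, Finset.mul_sum, ← Finset.sum_add_distrib]
      refine Finset.sum_congr rfl fun x _ => ?_
      rw [Finset.mul_sum, Finset.mul_sum, ← Finset.sum_add_distrib]
      exact Finset.sum_congr rfl fun y _ => by ring
    rw [e1]
    have h1 := mul_le_mul_of_nonneg_left h1c hθ0
    have h2 := mul_le_mul_of_nonneg_left h2c (by linarith : (0:ℝ) ≤ 1 - θ)
    linarith
  · rw [Finset.mul_sum, Finset.mul_sum, ← Finset.sum_add_distrib]
    refine Finset.sum_congr rfl fun x _ => ?_
    rw [Finset.mul_sum, Finset.mul_sum, ← Finset.sum_add_distrib]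
    exact Finset.sum_congr rfl fun y _ => by ring

lemma le_combo {S T : Set ℝ} (hS : S.Nonempty) (hT : T.Nonempty)
    (hSb : BddBelow S) (hTb : BddBelow T) {α β r : ℝ} (hα : 0 ≤ α) (hβ : 0 ≤ β)
    (h : ∀ s ∈ S, ∀ t ∈ T, r ≤ α * s + β * t) :
    r ≤ α * sInf S + β * sInf T := by
  refine le_of_forall_pos_le_add fun ε hε => ?_
  have hpos : (0:ℝ) < α + β + 1 := by linarith
  have hε'pos : 0 < ε / (α + β + 1) := div_pos hε hpos
  obtain ⟨s, hsS, hs⟩ := exists_lt_of_csInf_lt hS (lt_add_of_pos_right _ hε'pos)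
  obtain ⟨t, htT, ht⟩ := exists_lt_of_csInf_lt hT (lt_add_of_pos_right _ hε'pos)
  have h1 : α * s ≤ α * (sInf S + ε / (α + β + 1)) := mul_le_mul_of_nonneg_left hs.le hα
  have h2 : β * t ≤ β * (sInf T + ε / (α + β + 1)) := mul_le_mul_of_nonneg_left ht.le hβ
  have h3 : (α + β) * (ε / (α + β + 1)) ≤ ε := by
    rw [← mul_div_assoc, div_le_iff₀ hpos]
    nlinarith
  have h4 := h s hsS t htT
  nlinarith [h1, h2, h3, h4]

lemma pSet_slope (hC0 : ∀ x, C x x = 0) (hp0 : ∀ x, 0 ≤ phat x) (hp1 : ∑ x, phat x = 1)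
    {a b c : ℝ} (ha : 0 ≤ a) (hab : a ≤ b) (hbc : b ≤ c) :
    (c - a) * sInf (pSet C f phat b) ≤
      (c - b) * sInf (pSet C f phat a) + (b - a) * sInf (pSet C f phat c) := by
  rcases eq_or_lt_of_le (hab.trans hbc) with h | h
  · rw [← h] at hbc ⊢
    have hba : b = a := le_antisymm hbc hab
    rw [hba]; simp
  · have hca : (0:ℝ) < c - a := by linarith
    have hθ0 : 0 ≤ (c - b) / (c - a) := div_nonneg (by linarith) hca.le
    have hθ1 : (c - b) / (c - a) ≤ 1 := by rw [div_le_one hca]; linarith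
    have hmid : (c - b) / (c - a) * a + (1 - (c - b) / (c - a)) * c = b := by
      field_simp
      ring
    refine le_combo (pSet_nonempty hC0 hp0 ha)
      (pSet_nonempty hC0 hp0 (ha.trans (hab.trans hbc)))
      (pSet_bdd hp1 a) (pSet_bdd hp1 c) (by linarith) (by linarith) ?_
    intro s hs t ht
    have hmem := pSet_mix hθ0 hθ1 hs ht
    rw [hmid] at hmem
    have hle : sInf (pSet C f phat b) ≤ (c - b) / (c - a) * s + (1 - (c - b) / (c - a)) * t :=
      csInf_le (pSet_bdd hp1 b) hmem
    have h2 := mul_le_mul_of_nonneg_left hle hca.le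
    have e1 : (c - a) * ((c - b) / (c - a) * s + (1 - (c - b) / (c - a)) * t)
        = (c - b) * s + (b - a) * t := by
      field_simp
      ring
    rw [e1] at h2
    linarith

lemma weak_dual (hp0 : ∀ x, 0 ≤ phat x) {l t e : ℝ} (hl : 0 ≤ l)
    (he : e ∈ pSet C f phat t) :
    (∑ x, phat x * (-(univ.sup' univ_nonempty fun y => -f y - l * C x y))) - t * l ≤ e := by
  obtain ⟨π, h0, hrow, hc, rfl⟩ := he
  have key : ∀ x : X, phat x * (-(univ.sup' univ_nonempty fun y => -f y - l * C x y))
      ≤ ∑ y, π x y * (f y + l * C x y) := by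
    intro x
    have h1 : ∀ y : X, π x y * (-(univ.sup' univ_nonempty fun y => -f y - l * C x y))
        ≤ π x y * (f y + l * C x y) := by
      intro y
      have h2 : -f y - l * C x y ≤ univ.sup' univ_nonempty fun y => -f y - l * C x y :=
        Finset.le_sup' (fun y => -f y - l * C x y) (mem_univ y)
      exact mul_le_mul_of_nonneg_left (by linarith) (h0 x y)
    calc phat x * (-(univ.sup' univ_nonempty fun y => -f y - l * C x y))
        = ∑ y, π x y * (-(univ.sup' univ_nonempty fun y => -f y - l * C x y)) := by
          rw [← Finset.sum_mul, hrow x]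
      _ ≤ _ := Finset.sum_le_sum fun y _ => h1 y
  have key2 : ∑ x, phat x * (-(univ.sup' univ_nonempty fun y => -f y - l * C x y))
      ≤ (∑ x, ∑ y, π x y * f y) + l * (∑ x, ∑ y, C x y * π x y) := by
    calc ∑ x, phat x * (-(univ.sup' univ_nonempty fun y => -f y - l * C x y))
        ≤ ∑ x, ∑ y, π x y * (f y + l * C x y) := Finset.sum_le_sum fun x _ => key x
      _ = (∑ x, ∑ y, π x y * f y) + l * (∑ x, ∑ y, C x y * π x y) := by
          rw [Finset.mul_sum, ← Finset.sum_add_distrib]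
          refine Finset.sum_congr rfl fun x _ => ?_
          rw [Finset.mul_sum, ← Finset.sum_add_distrib]
          exact Finset.sum_congr rfl fun y _ => by ring
  have h3 : l * (∑ x, ∑ y, C x y * π x y) ≤ l * t := mul_le_mul_of_nonneg_left hc hl
  linarith

end Aux
/-- Strong duality for Wasserstein distributionally robust optimization on a finite
subset of `ℝ^d`: the worst-case expectation over the `q`-Wasserstein ball of radius
`ε` around `P̂` equals `sup_{λ ≥ 0} ( E_{P̂}[-(-f)^{λc}] - ε^q λ )` with
`c(x,y) = ‖x - y‖^q`. -/
theorem wasserstein_strong_duality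
    {X : Type*} [Fintype X] [Nonempty X] {d : ℕ}
    (ι : X → EuclideanSpace ℝ (Fin d)) (hι : Function.Injective ι)
    (f : X → ℝ) (ε : ℝ) (hε : 0 < ε) (q : ℕ) (hq : 1 ≤ q)
    (phat : X → ℝ) (hphat : ∀ x, 0 ≤ phat x) (hphat1 : ∑ x, phat x = 1) :
    sInf { E : ℝ | ∃ p : X → ℝ, (∀ y, 0 ≤ p y) ∧ (∑ y, p y = 1) ∧
        (∃ π : X → X → ℝ, (∀ x y, 0 ≤ π x y) ∧
          (∀ x, ∑ y, π x y = phat x) ∧ (∀ y, ∑ x, π x y = p y) ∧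
          (∑ x, ∑ y, ‖ι x - ι y‖ ^ q * π x y) ≤ ε ^ q) ∧
        E = ∑ y, p y * f y } =
      sSup { g : ℝ | ∃ l : ℝ, 0 ≤ l ∧
        g = (∑ x, phat x *
              (-(univ.sup' univ_nonempty fun y => -f y - l * ‖ι x - ι y‖ ^ q))) -
            ε ^ q * l } := by
  classical
  have hCx : ∀ x : X, (fun x y : X => ‖ι x - ι y‖ ^ q) x x = 0 := by
    intro x; simp [zero_pow (by omega : q ≠ 0)]
  -- the primal set in the statement coincides with `pSet`
  have hsetEq : { E : ℝ | ∃ p : X → ℝ, (∀ y, 0 ≤ p y) ∧ (∑ y, p y = 1) ∧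
        (∃ π : X → X → ℝ, (∀ x y, 0 ≤ π x y) ∧
          (∀ x, ∑ y, π x y = phat x) ∧ (∀ y, ∑ x, π x y = p y) ∧
          (∑ x, ∑ y, ‖ι x - ι y‖ ^ q * π x y) ≤ ε ^ q) ∧
        E = ∑ y, p y * f y }
      = pSet (fun x y : X => ‖ι x - ι y‖ ^ q) f phat (ε ^ q) := by
    ext e
    constructor
    · rintro ⟨p, hp0, hp1, ⟨π, hπ0, hπrow, hπcol, hπc⟩, rfl⟩
      refine ⟨π, hπ0, hπrow, hπc, ?_⟩
      have h1 : ∀ y : X, p y * f y = ∑ x, π x y * f y := by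
        intro y; rw [← hπcol y, Finset.sum_mul]
      rw [Finset.sum_congr rfl fun y _ => h1 y, Finset.sum_comm]
    · rintro ⟨π, hπ0, hπrow, hπc, rfl⟩
      refine ⟨fun y => ∑ x, π x y, fun y => Finset.sum_nonneg fun x _ => hπ0 x y, ?_,
        ⟨π, hπ0, hπrow, fun y => rfl, hπc⟩, ?_⟩
      · rw [Finset.sum_comm]
        rw [Finset.sum_congr rfl fun x _ => hπrow x, hphat1]
      · rw [Finset.sum_comm]
        exact Finset.sum_congr rfl fun y _ => (Finset.sum_mul _ _ _).symm
  rw [hsetEq]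
  have hQ : (0:ℝ) < ε ^ q := pow_pos hε q
  have hne : ∀ t : ℝ, 0 ≤ t → (pSet (fun x y : X => ‖ι x - ι y‖ ^ q) f phat t).Nonempty :=
    fun t ht => pSet_nonempty hCx hphat ht
  have hbdd : ∀ t : ℝ, BddBelow (pSet (fun x y : X => ‖ι x - ι y‖ ^ q) f phat t) :=
    fun t => pSet_bdd hphat1 t
  set Vt : ℝ → ℝ := fun t => sInf (pSet (fun x y : X => ‖ι x - ι y‖ ^ q) f phat t) with hVt
  have hmono : ∀ a b : ℝ, 0 ≤ a → a ≤ b → Vt b ≤ Vt a :=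
    fun a b ha hab => csInf_le_csInf (hbdd b) (hne a ha) (pSet_mono hab)
  have slope' : ∀ a b c : ℝ, 0 ≤ a → a ≤ b → b ≤ c →
      (c - a) * Vt b ≤ (c - b) * Vt a + (b - a) * Vt c :=
    fun a b c ha hab hbc => pSet_slope hCx hphat hphat1 ha hab hbc
  obtain ⟨e0, he0⟩ := hne (ε ^ q) hQ.le
  have hSdne : ({ g : ℝ | ∃ l : ℝ, 0 ≤ l ∧
        g = (∑ x, phat x *
              (-(univ.sup' univ_nonempty fun y => -f y - l * ‖ι x - ι y‖ ^ q))) -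
            ε ^ q * l } : Set ℝ).Nonempty :=
    ⟨_, 0, le_rfl, rfl⟩
  have hSdub : ∀ g ∈ { g : ℝ | ∃ l : ℝ, 0 ≤ l ∧
        g = (∑ x, phat x *
              (-(univ.sup' univ_nonempty fun y => -f y - l * ‖ι x - ι y‖ ^ q))) -
            ε ^ q * l }, g ≤ Vt (ε ^ q) := by
    rintro g ⟨l, hl, rfl⟩
    exact le_csInf (hne (ε ^ q) hQ.le) fun e he => weak_dual hphat hl he
  have hSdbdd : BddAbove ({ g : ℝ | ∃ l : ℝ, 0 ≤ l ∧
        g = (∑ x, phat x *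
              (-(univ.sup' univ_nonempty fun y => -f y - l * ‖ι x - ι y‖ ^ q))) -
            ε ^ q * l } : Set ℝ) :=
    ⟨Vt (ε ^ q), fun g hg => hSdub g hg⟩
  refine le_antisymm ?_ (csSup_le hSdne hSdub)
  -- strong duality direction
  refine le_of_forall_pos_le_add fun δ hδ => ?_
  set V := Vt (ε ^ q) with hV
  set V0 := Vt 0 with hV0
  have hD : 0 ≤ V0 - V := sub_nonneg.mpr (hmono 0 (ε ^ q) le_rfl hQ.le)
  set r := (V0 - V) / ((V0 - V) + δ) with hr
  have hDδ : (0:ℝ) < (V0 - V) + δ := by linarith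
  have hr0 : 0 ≤ r := div_nonneg hD hDδ.le
  have hr1 : r < 1 := by rw [hr, div_lt_one hDδ]; linarith
  set t1 := r * ε ^ q with ht1def
  have ht10 : 0 ≤ t1 := mul_nonneg hr0 hQ.le
  have ht1E : t1 < ε ^ q := by
    rw [ht1def]; nlinarith
  have hposEt : (0:ℝ) < ε ^ q - t1 := by linarith
  set W1 := Vt t1 with hW1
  -- the secant slope
  have hVt1V : V ≤ W1 := hmono t1 (ε ^ q) ht10 ht1E.le
  set lam := (W1 - V) / (ε ^ q - t1) with hlam
  have hlam0 : 0 ≤ lam := div_nonneg (by linarith) hposEt.le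
  have hlamEq : lam * (ε ^ q - t1) = W1 - V := by
    rw [hlam, div_mul_cancel₀]
    exact hposEt.ne'
  -- gap bound : W1 - V < δ
  have hgapδ : W1 - V < δ := by
    have hconv1 : (ε ^ q - 0) * W1 ≤ (ε ^ q - t1) * V0 + (t1 - 0) * V :=
      slope' 0 t1 (ε ^ q) le_rfl ht10 ht1E.le
    rw [ht1def] at hconv1
    have hrD : (1 - r) * (V0 - V) < δ := by
      have h1 : (1 - r) * (V0 - V) = δ * (V0 - V) / ((V0 - V) + δ) := by
        rw [hr]; field_simp; ring
      rw [h1, div_lt_iff₀ hDδ]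
      nlinarith
    have hgap : W1 - V ≤ (1 - r) * (V0 - V) := by
      have hc' : ε ^ q * (W1 - V) ≤ ε ^ q * ((1 - r) * (V0 - V)) := by
        nlinarith [hconv1]
      exact le_of_mul_le_mul_left hc' hQ
    linarith
  -- key inequality : ∀ t ≥ 0, V + lam * ε^q - δ ≤ Vt t + lam * t
  have Hkey : ∀ t : ℝ, 0 ≤ t → V + lam * ε ^ q - δ ≤ Vt t + lam * t := by
    intro t ht
    rcases le_or_gt t t1 with hc | hc
    · have hsl : (ε ^ q - t) * W1 ≤ (ε ^ q - t1) * Vt t + (t1 - t) * V :=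
        slope' t t1 (ε ^ q) ht hc ht1E.le
      have h1 : lam * (ε ^ q - t) * (ε ^ q - t1) = (W1 - V) * (ε ^ q - t) := by
        linear_combination (ε ^ q - t) * hlamEq
      rw [← mul_le_mul_iff_right₀ hposEt]
      nlinarith [hsl, h1, mul_pos hposEt hδ]
    · rcases le_or_gt t (ε ^ q) with hc2 | hc2
      · have hVtV : V ≤ Vt t := hmono t (ε ^ q) ht hc2
        have h2 : lam * (ε ^ q - t) ≤ lam * (ε ^ q - t1) :=
          mul_le_mul_of_nonneg_left (by linarith) hlam0
        linarith [hlamEq, hgapδ]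
      · have hsl : (t - t1) * V ≤ (t - ε ^ q) * W1 + (ε ^ q - t1) * Vt t :=
          slope' t1 (ε ^ q) t ht10 ht1E.le hc2.le
        have h1 : lam * (t - ε ^ q) * (ε ^ q - t1) = (W1 - V) * (t - ε ^ q) := by
          linear_combination (t - ε ^ q) * hlamEq
        rw [← mul_le_mul_iff_right₀ hposEt]
        nlinarith [hsl, h1, mul_pos hposEt hδ]
  -- build the dual element at `lam`
  have hexists : ∀ x : X, ∃ y : X,
      (univ.sup' univ_nonempty fun y => -f y - lam * ‖ι x - ι y‖ ^ q)
        = -f y - lam * ‖ι x - ι y‖ ^ q := by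
    intro x
    obtain ⟨y, -, hy⟩ := Finset.exists_mem_eq_sup' univ_nonempty
      (fun y => -f y - lam * ‖ι x - ι y‖ ^ q)
    exact ⟨y, hy⟩
  choose ymax hymax using hexists
  set tstar := ∑ x, ‖ι x - ι (ymax x)‖ ^ q * phat x with htstar
  have htstar0 : 0 ≤ tstar :=
    Finset.sum_nonneg fun x _ => mul_nonneg (pow_nonneg (norm_nonneg _) q) (hphat x)
  have hestar : (∑ x, phat x * f (ymax x)) ∈
      pSet (fun x y : X => ‖ι x - ι y‖ ^ q) f phat tstar := by
    refine ⟨fun x y => if y = ymax x then phat x else 0, ?_, ?_, ?_, ?_⟩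
    · intro x y; dsimp only; split
      · exact hphat x
      · exact le_rfl
    · intro x; simp
    · refine le_of_eq (Finset.sum_congr rfl fun x _ => ?_)
      rw [Finset.sum_eq_single (ymax x)]
      · simp
      · intro b _ hb; simp [hb]
      · simp
    · refine Finset.sum_congr rfl fun x _ => ?_
      rw [Finset.sum_eq_single (ymax x)]
      · simp
      · intro b _ hb; simp [hb]
      · simp
  have h5 : Vt tstar ≤ ∑ x, phat x * f (ymax x) := csInf_le (hbdd tstar) hestar
  have h6 := Hkey tstar htstar0
  set gval := (∑ x, phat x *
      (-(univ.sup' univ_nonempty fun y => -f y - lam * ‖ι x - ι y‖ ^ q))) -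
      ε ^ q * lam with hgval
  have hgmem : gval ∈ { g : ℝ | ∃ l : ℝ, 0 ≤ l ∧
        g = (∑ x, phat x *
              (-(univ.sup' univ_nonempty fun y => -f y - l * ‖ι x - ι y‖ ^ q))) -
            ε ^ q * l } := ⟨lam, hlam0, hgval⟩
  have h7 : gval = (∑ x, phat x * f (ymax x)) + lam * tstar - ε ^ q * lam := by
    rw [hgval]
    congr 1
    have h8 : ∀ x : X, phat x *
        (-(univ.sup' univ_nonempty fun y => -f y - lam * ‖ι x - ι y‖ ^ q))
        = phat x * f (ymax x) + lam * (‖ι x - ι (ymax x)‖ ^ q * phat x) := by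
      intro x; rw [hymax x]; ring
    rw [Finset.sum_congr rfl fun x _ => h8 x, Finset.sum_add_distrib, ← Finset.mul_sum,
      htstar]
  have h9 : gval ≤ sSup { g : ℝ | ∃ l : ℝ, 0 ≤ l ∧
        g = (∑ x, phat x *
              (-(univ.sup' univ_nonempty fun y => -f y - l * ‖ι x - ι y‖ ^ q))) -
            ε ^ q * l } := le_csSup hSdbdd hgmem
  have h10 : V - δ ≤ gval := by rw [h7]; linarith
  show V ≤ sSup { g : ℝ | ∃ l : ℝ, 0 ≤ l ∧
        g = (∑ x, phat x *
              (-(univ.sup' univ_nonempty fun y => -f y - l * ‖ι x - ι y‖ ^ q))) -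
            ε ^ q * l } + δ
  linarith
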